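/- Let G be a finite connected simple graph with edge-weight function w : E(G) → ℝ such that w(e) > 1 for every edge e and w is injective on the edge set, and let T be the unique minimum spanning tree of G. Then there exists a natural number K such that for all k ≥ K and all pairs of vertices S and D, every path from S to D minimizing the transformed length ∑_{e ∈ P} w(e)^k among all S–D paths uses only edges of T (i.e., for sufficiently large exponent k, all shortest paths under the transformed weights lie on the minimum spanning tree). -/

import Mathlib

open SimpleGraph

/-- `T` is a spanning tree of `G`: a spanning subgraph (same vertex set, edges of `G`)
that is a tree (connected and acyclic). -/
def IsSpanningTree {V : Type*} (G T : SimpleGraph V) : Prop :=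
  T ≤ G ∧ T.IsTree

/-- Total edge weight of a graph (sum of `w` over its edge set). -/
noncomputable def totalWeight {V : Type*} [Fintype V] (w : Sym2 V → ℝ)
    (T : SimpleGraph V) : ℝ :=
  ∑ e ∈ T.edgeSet.toFinite.toFinset, w e

lemma walk_decomp {V : Type*} {G : SimpleGraph V} {u v x y : V}
    (p : G.Walk u v) (h : s(x,y) ∈ p.edges) :
    ∃ (a b : V), s(a,b) = s(x,y) ∧ ∃ (q : G.Walk u a) (hadj : G.Adj a b) (r : G.Walk b v),
      p = q.append (Walk.cons hadj r) := by
  induction p with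
  | nil => simp at h
  | @cons u w v h' p' ih =>
    rw [Walk.edges_cons, List.mem_cons] at h
    rcases h with h | h
    · exact ⟨u, w, h.symm, Walk.nil, h', p', by simp⟩
    · obtain ⟨a, b, hab, q, hadj, r, rfl⟩ := ih h
      exact ⟨a, b, hab, Walk.cons h' q, hadj, r, by simp [Walk.cons_append]⟩

lemma reachable_of_edges {V : Type*} {G H : SimpleGraph V} {u v : V} (p : G.Walk u v)
    (h : ∀ c d, G.Adj c d → s(c,d) ∈ p.edges → H.Reachable c d) : H.Reachable u v := by
  induction p with
  | nil => exact Reachable.refl _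
  | @cons u w v h' p' ih =>
    refine (h u w h' (by simp)).trans (ih fun c d hcd hm => h c d hcd (by simp [hm]))

lemma cycle_property {V : Type*} [Fintype V]
    (G : SimpleGraph V) (hG : G.Connected)
    (w : Sym2 V → ℝ)
    (hw : Set.InjOn w G.edgeSet)
    (T : SimpleGraph V) (hT : IsSpanningTree G T)
    (hmin : ∀ T', IsSpanningTree G T' → totalWeight w T ≤ totalWeight w T')
    {a b : V} (hab : G.Adj a b) (heT : s(a,b) ∉ T.edgeSet)
    (R : T.Walk a b) (hR : R.IsPath) : ∀ f ∈ R.edges, w f < w s(a,b) := by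
  classical
  intro f hf
  induction f using Sym2.ind with
  | _ x y =>
  obtain ⟨x', y', hxy, q, hadj, r, hRe⟩ := walk_decomp R hf
  rw [← hxy] at hf ⊢
  set f := s(x', y') with hfdef
  have hfT : f ∈ T.edgeSet := hadj
  have heG : s(a,b) ∈ G.edgeSet := hab
  have hfe : f ≠ s(a,b) := fun h => heT (h ▸ hfT)
  -- nodup edges
  have hnodup : R.edges.Nodup := hR.edges_nodup
  have hedges : R.edges = q.edges ++ f :: r.edges := by
    rw [hRe, Walk.edges_append, Walk.edges_cons]
  have hfq : f ∉ q.edges := by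
    rw [hedges] at hnodup
    have := List.disjoint_of_nodup_append hnodup
    exact fun h => this h (by simp)
  have hfr : f ∉ r.edges := by
    rw [hedges] at hnodup
    exact ((List.nodup_append'.mp hnodup).2.1.notMem · )
  -- the swapped graph
  set S : Set (Sym2 V) := (T.edgeSet \ {f}) ∪ {s(a,b)} with hSdef
  set T' : SimpleGraph V := fromEdgeSet S with hT'def
  have hSsub : S ⊆ G.edgeSet := by
    rintro g (⟨hg, -⟩ | hg)
    · exact (edgeSet_subset_edgeSet.mpr hT.1) hg
    · simpa using hg ▸ heG
  have hT'le : T' ≤ G := by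
    calc T' ≤ fromEdgeSet G.edgeSet := fromEdgeSet_mono hSsub
    _ = G := fromEdgeSet_edgeSet G
  have hT'edge : T'.edgeSet = S := by
    rw [hT'def, edgeSet_fromEdgeSet]
    ext g
    simp only [Set.mem_diff, Set.mem_setOf_eq, and_iff_left_iff_imp]
    exact fun hg hdiag => G.not_isDiag_of_mem_edgeSet (hSsub hg) hdiag
  have hT'ab : T'.Adj a b := by
    rw [← mem_edgeSet, hT'edge]; right; rfl
  have hqT' : ∀ g ∈ q.edges, g ∈ T'.edgeSet := by
    intro g hg
    rw [hT'edge]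
    exact Or.inl ⟨q.edges_subset_edgeSet hg, fun h => hfq (h ▸ hg)⟩
  have hrT' : ∀ g ∈ r.edges, g ∈ T'.edgeSet := by
    intro g hg
    rw [hT'edge]
    exact Or.inl ⟨r.edges_subset_edgeSet hg, fun h => hfr (h ▸ hg)⟩
  have hxyreach : T'.Reachable x' y' :=
    ((q.transfer T' hqT').reverse.reachable.trans hT'ab.reachable).trans
      (r.transfer T' hrT').reverse.reachable
  -- connectivity
  have hT'conn : T'.Connected := by
    rw [connected_iff]
    refine ⟨fun u v => ?_, hG.nonempty⟩
    obtain ⟨p⟩ := hT.2.isConnected u v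
    refine reachable_of_edges p fun c d hcd hm => ?_
    by_cases hcf : s(c,d) = f
    · rw [hfdef, Sym2.eq_iff] at hcf
      rcases hcf with ⟨rfl, rfl⟩ | ⟨rfl, rfl⟩
      · exact hxyreach
      · exact hxyreach.symm
    · exact Adj.reachable (by rw [← mem_edgeSet, hT'edge]; exact Or.inl ⟨hcd, hcf⟩)
  -- acyclicity
  have hT'acyclic : T'.IsAcyclic := by
    intro v c hc
    by_cases hec : s(a,b) ∈ c.edges
    · -- e in the cycle : a,b reachable without e
      have hnb : ¬ T'.IsBridge s(a,b) := by
        intro hb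
        exact ((isBridge_iff_forall_cycle_notMem hT'ab).mp hb) c hc hec
      rw [isBridge_iff, not_not, deleteEdges] at hnb
      obtain ⟨W⟩ := hnb
      set Tf : SimpleGraph V := T \ fromEdgeSet {f} with hTfdef
      have hTfedge : Tf.edgeSet = T.edgeSet \ {f} := by
        rw [hTfdef, edgeSet_sdiff, edgeSet_fromEdgeSet]
        ext g
        simp only [Set.mem_diff, Set.mem_singleton_iff, Set.mem_setOf_eq, not_and, not_not]
        constructor
        · rintro ⟨hg, h2⟩
          refine ⟨hg, fun hgf => ?_⟩
          exact (T.not_isDiag_of_mem_edgeSet (hgf ▸ hfT)) (h2 hgf)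
        · rintro ⟨hg, h2⟩
          exact ⟨hg, fun hgf => absurd hgf h2⟩
      have hWTf : ∀ g ∈ W.edges, g ∈ Tf.edgeSet := by
        intro g hg
        have h1 := W.edges_subset_edgeSet hg
        rw [edgeSet_sdiff] at h1
        obtain ⟨h1, h2⟩ := h1
        rw [hT'edge] at h1
        have hgne : g ≠ s(a,b) := fun hge => h2 (by
          rw [hge, edgeSet_fromEdgeSet]
          exact ⟨rfl, G.not_isDiag_of_mem_edgeSet heG⟩)
        rw [hTfedge]
        rcases h1 with ⟨h1, h3⟩ | h1
        · exact ⟨h1, h3⟩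
        · exact absurd h1 hgne
      have hqTf : ∀ g ∈ q.edges, g ∈ Tf.edgeSet := by
        intro g hg
        rw [hTfedge]
        exact ⟨q.edges_subset_edgeSet hg, fun h => hfq (h ▸ hg)⟩
      have hrTf : ∀ g ∈ r.edges, g ∈ Tf.edgeSet := by
        intro g hg
        rw [hTfedge]
        exact ⟨r.edges_subset_edgeSet hg, fun h => hfr (h ▸ hg)⟩
      have hreach : Tf.Reachable x' y' :=
        (((q.transfer Tf hqTf).reverse.reachable.trans (W.transfer Tf hWTf).reachable).trans
          (r.transfer Tf hrTf).reverse.reachable)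
      have hbridge : T.IsBridge f :=
        (isAcyclic_iff_forall_adj_isBridge.mp hT.2.IsAcyclic) hadj
      rw [isBridge_iff] at hbridge
      exact hbridge hreach
    · -- e not in the cycle: cycle lives in T
      have hcT : ∀ g ∈ c.edges, g ∈ T.edgeSet := by
        intro g hg
        have h1 := c.edges_subset_edgeSet hg
        rw [hT'edge] at h1
        rcases h1 with ⟨h1, -⟩ | h1
        · exact h1
        · exact absurd (h1 ▸ hg) hec
      exact hT.2.IsAcyclic (c.transfer T hcT) (hc.transfer hcT)
  -- T' is a spanning tree
  have hT'tree : IsSpanningTree G T' := ⟨hT'le, hT'conn, hT'acyclic⟩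
  -- weight comparison
  have hEfin : T'.edgeSet.toFinite.toFinset = insert s(a,b) ((T.edgeSet.toFinite.toFinset).erase f) := by
    ext g
    simp only [Set.Finite.mem_toFinset, hT'edge, hSdef, Finset.mem_insert, Finset.mem_erase,
      Set.mem_union, Set.mem_diff, Set.mem_singleton_iff]
    tauto
  have hfmem : f ∈ T.edgeSet.toFinite.toFinset := by simpa using hfT
  have hemem : s(a,b) ∉ (T.edgeSet.toFinite.toFinset).erase f := by
    simp only [Finset.mem_erase, Set.Finite.mem_toFinset]
    tauto
  have hW' : totalWeight w T' = w s(a,b) + (totalWeight w T - w f) := by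
    rw [totalWeight, hEfin, Finset.sum_insert hemem, Finset.sum_erase_eq_sub hfmem]
    rfl
  have hle := hmin T' hT'tree
  rw [hW'] at hle
  have hwle : w f ≤ w s(a,b) := by linarith
  exact lt_of_le_of_ne hwle fun h => hfe (hw ((edgeSet_subset_edgeSet.mpr hT.1) hfT) heG h)

/-- In a finite connected graph with distinct edge weights all `> 1`, with `T` the
(unique) minimum spanning tree, there is a `K` such that for all `k ≥ K` and all
pairs of vertices `S`, `D`, every `S`–`D` path minimizing the transformed length
`∑_{e ∈ P} w(e) ^ k` uses only edges of `T`. -/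
theorem transformed_shortest_paths_lie_on_mst {V : Type*} [Fintype V]
    (G : SimpleGraph V) (hG : G.Connected)
    (w : Sym2 V → ℝ) (hw1 : ∀ e ∈ G.edgeSet, 1 < w e)
    (hw : Set.InjOn w G.edgeSet)
    (T : SimpleGraph V) (hT : IsSpanningTree G T)
    (hmin : ∀ T', IsSpanningTree G T' → totalWeight w T ≤ totalWeight w T') :
    ∃ K : ℕ, ∀ k : ℕ, K ≤ k →
      ∀ S D : V, ∀ P : G.Walk S D, P.IsPath →
        (∀ Q : G.Walk S D, Q.IsPath →
          (P.edges.map (fun e => w e ^ k)).sum ≤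
            (Q.edges.map (fun e => w e ^ k)).sum) →
        ∀ e ∈ P.edges, e ∈ T.edgeSet := by
  classical
  have hTG : T.edgeSet ⊆ G.edgeSet := edgeSet_subset_edgeSet.mpr hT.1
  -- canonical tree paths
  let Rp : ∀ a b : V, T.Path a b := fun a b => ((hT.2.isConnected a b).some).toPath
  -- per-pair exponent
  have hchoice : ∀ p : V × V, ∃ Ke : ℕ, ∀ k, Ke ≤ k → G.Adj p.1 p.2 → s(p.1,p.2) ∉ T.edgeSet →
      (((Rp p.1 p.2 : T.Walk p.1 p.2)).edges.map (fun g => w g ^ k)).sum < w s(p.1,p.2) ^ k := by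
    rintro ⟨a, b⟩
    by_cases hab : G.Adj a b
    · by_cases hnt : s(a,b) ∉ T.edgeSet
      · set R : T.Walk a b := (Rp a b : T.Walk a b) with hRdef
        have hR : R.IsPath := (Rp a b).2
        have hcyc : ∀ f ∈ R.edges, w f < w s(a,b) :=
          cycle_property G hG w hw T hT hmin hab hnt R hR
        have hfG : ∀ f ∈ R.edges, f ∈ G.edgeSet := fun f hf => hTG (R.edges_subset_edgeSet hf)
        set F : Finset ℝ := insert (1:ℝ) (R.edges.toFinset.image w) with hFdef
        have hFne : F.Nonempty := ⟨1, Finset.mem_insert_self _ _⟩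
        set r : ℝ := F.max' hFne with hrdef
        have h1r : (1:ℝ) ≤ r := Finset.le_max' _ _ (Finset.mem_insert_self _ _)
        have hfr : ∀ f ∈ R.edges, w f ≤ r := fun f hf =>
          Finset.le_max' _ _ (Finset.mem_insert_of_mem
            (Finset.mem_image_of_mem w (List.mem_toFinset.mpr hf)))
        have hrw : r < w s(a,b) := by
          apply Finset.max'_lt_iff F hFne |>.mpr
          intro x hx
          rw [hFdef, Finset.mem_insert] at hx
          rcases hx with rfl | hx
          · exact hw1 _ hab
          · obtain ⟨f, hf, rfl⟩ := Finset.mem_image.mp hx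
            exact hcyc f (List.mem_toFinset.mp hf)
        have hr0 : (0:ℝ) < r := lt_of_lt_of_le one_pos h1r
        set ρ : ℝ := w s(a,b) / r with hρdef
        have hρ : 1 < ρ := (one_lt_div hr0).mpr hrw
        obtain ⟨k₀, hk₀⟩ := pow_unbounded_of_one_lt (Fintype.card V : ℝ) hρ
        refine ⟨k₀, fun k hk _ _ => ?_⟩
        have hcard : ((Fintype.card V : ℝ)) < ρ ^ k :=
          lt_of_lt_of_le hk₀ (pow_le_pow_right₀ hρ.le hk)
        have hrk0 : (0:ℝ) < r ^ k := pow_pos hr0 k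
        have hkey : (Fintype.card V : ℝ) * r ^ k < w s(a,b) ^ k := by
          have := mul_lt_mul_of_pos_right hcard hrk0
          rwa [hρdef, div_pow, div_mul_cancel₀ _ (ne_of_gt hrk0)] at this
        refine lt_of_le_of_lt ?_ hkey
        have hsum : (R.edges.map (fun g => w g ^ k)).sum ≤
            (R.edges.map (fun g => w g ^ k)).length • (r ^ k) := by
          apply List.sum_le_card_nsmul
          intro x hx
          obtain ⟨f, hf, rfl⟩ := List.mem_map.mp hx
          exact pow_le_pow_left₀ (le_of_lt (lt_trans zero_lt_one (hw1 f (hfG f hf)))) (hfr f hf) k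
        refine le_trans hsum ?_
        rw [nsmul_eq_mul]
        apply mul_le_mul_of_nonneg_right _ (le_of_lt hrk0)
        rw [List.length_map]
        have : R.edges.length = R.length := R.length_edges
        rw [this]
        exact_mod_cast le_of_lt hR.length_lt
      · exact ⟨0, fun k _ _ h => absurd h (not_not.mpr (not_not.mp hnt))⟩
    · exact ⟨0, fun k _ h => absurd h hab⟩
  choose F hF using hchoice
  refine ⟨Finset.univ.sup F, fun k hk S D P hP hmindist e he => ?_⟩
  induction e using Sym2.ind with
  | _ x y =>
  by_contra heT
  obtain ⟨a, b, hab2, q, hadj, rr, hPe⟩ := walk_decomp P he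
  rw [← hab2] at heT
  -- the tree detour
  set R : T.Walk a b := (Rp a b : T.Walk a b) with hRdef
  have hRG : ∀ g ∈ R.edges, g ∈ G.edgeSet := fun g hg => hTG (R.edges_subset_edgeSet hg)
  set Q0 : G.Walk S D := q.append ((R.transfer G hRG).append rr) with hQ0def
  have hKle : F (a, b) ≤ k := le_trans (Finset.le_sup (Finset.mem_univ (a,b))) hk
  have hdetour : ((R.edges.map (fun g => w g ^ k)).sum < w s(a,b) ^ k) :=
    hF (a, b) k hKle hadj heT
  have hsumQ0 : (Q0.edges.map (fun g => w g ^ k)).sum <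
      (P.edges.map (fun g => w g ^ k)).sum := by
    rw [hQ0def, hPe]
    simp only [Walk.edges_append, Walk.edges_cons, List.map_append, List.sum_append,
      List.map_cons, List.sum_cons, Walk.edges_transfer]
    linarith
  have hQpath := Q0.bypass_isPath
  have hsumQ : ((Q0.bypass.edges.map (fun g => w g ^ k)).sum ≤
      (Q0.edges.map (fun g => w g ^ k)).sum) := by
    obtain ⟨l, hperm, hsl⟩ := List.subperm_of_subset hQpath.edges_nodup Q0.edges_bypass_subset
    calc (Q0.bypass.edges.map (fun g => w g ^ k)).sum
        = (l.map (fun g => w g ^ k)).sum := ((hperm.map _).sum_eq).symm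
      _ ≤ (Q0.edges.map (fun g => w g ^ k)).sum := by
          apply (hsl.map _).sum_le_sum
          intro x hx
          obtain ⟨f, hf, rfl⟩ := List.mem_map.mp hx
          have : (0:ℝ) < w f :=
            lt_trans zero_lt_one (hw1 f (Q0.edges_subset_edgeSet hf))
          positivity
  have := hmindist Q0.bypass hQpath
  linarith
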